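/- Under the ergodic grouped M-estimation setting, fix τ ∈ 𝒢 and assume that the population criterion S(·, τ) attains a unique minimum on Θ at a point θ*(τ). Let θ̃ₙ : Ω → Θ be measurable maps such that for P-almost every ω, Sₙ(θ̃ₙ(ω), τ)(ω) = min_{θ∈Θ} Sₙ(θ, τ)(ω). Then the profile estimator is consistent: ‖θ̃ₙ − θ*(τ)‖ converges to 0 in P-measure as n → ∞. -/

import Mathlib

open MeasureTheory Filter Topology
open scoped ENNReal NNReal

set_option linter.unusedSectionVars false
set_option linter.unusedVariables false
set_option maxHeartbeats 1000000
set_option synthInstance.maxHeartbeats 400000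

section Toolbox
variable {Ω : Type*} [MeasurableSpace Ω] {P : Measure Ω} [IsProbabilityMeasure P] {T : Ω → Ω}

noncomputable def koopman (hT : MeasurePreserving T P P) : Lp ℝ 2 P →L[ℝ] Lp ℝ 2 P :=
  (Lp.compMeasurePreservingₗᵢ ℝ T hT).toContinuousLinearMap

lemma koopman_coeFn (hT : MeasurePreserving T P P) (G : Lp ℝ 2 P) :
    koopman hT G =ᵐ[P] fun ω => G (T ω) :=
  Lp.coeFn_compMeasurePreserving G hT

lemma koopman_iter_coeFn (hT : MeasurePreserving T P P) (G : Lp ℝ 2 P) (t : ℕ) :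
    ((⇑(koopman hT))^[t] G : Lp ℝ 2 P) =ᵐ[P] fun ω => G (T^[t] ω) := by
  induction t with
  | zero => simp [Filter.EventuallyEq.refl]
  | succ t ih =>
    rw [Function.iterate_succ_apply']
    refine (koopman_coeFn hT _).trans ?_
    have := ih.comp_tendsto hT.quasiMeasurePreserving.tendsto_ae
    filter_upwards [this] with ω hω
    simpa [Function.comp, Function.iterate_succ_apply] using hω

lemma birkhoffAverage_coeFn (hT : MeasurePreserving T P P) (G : Lp ℝ 2 P) (n : ℕ) :
    (birkhoffAverage ℝ (⇑(koopman hT)) _root_.id n G : Lp ℝ 2 P) =ᵐ[P]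
      fun ω => (n : ℝ)⁻¹ • ∑ t ∈ Finset.range n, G (T^[t] ω) := by
  have hsum : ((birkhoffSum (⇑(koopman hT)) _root_.id n G : Lp ℝ 2 P) : Ω → ℝ) =ᵐ[P]
      fun ω => ∑ t ∈ Finset.range n, G (T^[t] ω) := by
    induction n with
    | zero =>
      simp only [birkhoffSum, Finset.range_zero, Finset.sum_empty]
      exact Lp.coeFn_zero ℝ 2 P
    | succ n ih =>
      rw [birkhoffSum_succ]
      refine (Lp.coeFn_add _ _).trans ?_
      filter_upwards [ih, koopman_iter_coeFn hT G n] with ω h1 h2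
      simp [Finset.sum_range_succ, h1, h2]
  refine (Lp.coeFn_smul _ _).trans ?_
  filter_upwards [hsum] with ω hω
  simp [birkhoffAverage, hω]

/-- pointwise average notation -/
noncomputable def bAvg (T : Ω → Ω) (f : Ω → ℝ) (n : ℕ) (ω : Ω) : ℝ :=
  (n : ℝ)⁻¹ • ∑ t ∈ Finset.range n, f (T^[t] ω)

lemma integral_comp_iter (hT : MeasurePreserving T P P) {f : Ω → ℝ}
    (hf : AEStronglyMeasurable f P) (t : ℕ) :
    ∫ ω, f (T^[t] ω) ∂P = ∫ ω, f ω ∂P := by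
  have hmp : MeasurePreserving (T^[t]) P P := hT.iterate t
  rw [← integral_map hmp.measurable.aemeasurable (by rwa [hmp.map_eq]), hmp.map_eq]

lemma integral_bAvg (hT : MeasurePreserving T P P) {f : Ω → ℝ}
    (hf : Integrable f P) {n : ℕ} (hn : 1 ≤ n) :
    ∫ ω, bAvg T f n ω ∂P = ∫ ω, f ω ∂P := by
  have hint : ∀ t : ℕ, Integrable (fun ω => f (T^[t] ω)) P := fun t =>
    ((hT.iterate t).integrable_comp hf.aestronglyMeasurable).mpr hf
  simp only [bAvg, smul_eq_mul]
  rw [integral_const_mul, integral_finset_sum _ (fun t _ => hint t)]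
  have : ∀ t ∈ Finset.range n, ∫ ω, f (T^[t] ω) ∂P = ∫ ω, f ω ∂P := fun t _ =>
    integral_comp_iter hT hf.aestronglyMeasurable t
  rw [Finset.sum_congr rfl this, Finset.sum_const, Finset.card_range, nsmul_eq_mul]
  field_simp

/-- L² mean ergodic theorem with explicit constant limit. -/
lemma l2_birkhoff (hT : Ergodic T P) {g : Ω → ℝ} (hg : MemLp g 2 P) :
    Tendsto (fun n => eLpNorm (fun ω => bAvg T g n ω - ∫ ω, g ω ∂P) 2 P) atTop (𝓝 0) := by
  set U : Lp ℝ 2 P →L[ℝ] Lp ℝ 2 P := koopman hT.toMeasurePreserving with hU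
  set G : Lp ℝ 2 P := hg.toLp g with hG
  have hnorm : ‖U‖ ≤ 1 := LinearIsometry.norm_toContinuousLinearMap_le _
  have hclosed : IsClosed ((LinearMap.eqLocus (U : Lp ℝ 2 P →ₗ[ℝ] Lp ℝ 2 P) 1 :
      Submodule ℝ (Lp ℝ 2 P)) : Set (Lp ℝ 2 P)) := isClosed_eq U.continuous continuous_id
  haveI := hclosed.completeSpace_coe
  have htend := U.tendsto_birkhoffAverage_orthogonalProjection hnorm G
  set L : Lp ℝ 2 P :=
    ↑(Submodule.orthogonalProjectionOnto (LinearMap.eqLocus (U : Lp ℝ 2 P →ₗ[ℝ] Lp ℝ 2 P) 1) G) with hL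
  have hfix : U L = L := by
    have := (Submodule.orthogonalProjectionOnto (LinearMap.eqLocus (U : Lp ℝ 2 P →ₗ[ℝ] Lp ℝ 2 P) 1) G).2
    rw [LinearMap.mem_eqLocus] at this
    simpa [hL] using this
  -- L is a.e. constant
  have hinv : (⇑(L : Lp ℝ 2 P) : Ω → ℝ) ∘ T =ᵐ[P] (L : Ω → ℝ) := by
    have h1 := koopman_coeFn hT.toMeasurePreserving L
    rw [hfix] at h1
    exact h1.symm
  obtain ⟨c, hc⟩ := hT.ae_eq_const_of_ae_eq_comp₀
    ((Lp.aestronglyMeasurable L).aemeasurable.nullMeasurable) hinv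
  -- coeFn of averages
  have hGg : (G : Ω → ℝ) =ᵐ[P] g := hg.coeFn_toLp
  have hGgt : ∀ᵐ ω ∂P, ∀ t : ℕ, (G : Ω → ℝ) (T^[t] ω) = g (T^[t] ω) := by
    rw [ae_all_iff]
    intro t
    exact hGg.comp_tendsto ((hT.toMeasurePreserving.iterate t).quasiMeasurePreserving.tendsto_ae)
  set Ψ : ℕ → Lp ℝ 2 P := fun n => birkhoffAverage ℝ (⇑U) _root_.id n G with hΨ
  have hΨcoe : ∀ n, ((Ψ n : Lp ℝ 2 P) : Ω → ℝ) =ᵐ[P] bAvg T g n := by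
    intro n
    refine (birkhoffAverage_coeFn hT.toMeasurePreserving G n).trans ?_
    filter_upwards [hGgt] with ω hω
    simp only [bAvg]
    congr 1
    exact Finset.sum_congr rfl fun t _ => hω t
  -- identify the constant
  have hone : MemLp (fun _ : Ω => (1 : ℝ)) 2 P := memLp_const 1
  set one : Lp ℝ 2 P := hone.toLp _ with honedef
  have hinner : ∀ F : Lp ℝ 2 P, (inner ℝ F one : ℝ) = ∫ ω, F ω ∂P := by
    intro F
    rw [MeasureTheory.L2.inner_def]
    refine integral_congr_ae ?_
    filter_upwards [hone.coeFn_toLp] with ω hω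
    simp [honedef, hω]
  have htendint : Tendsto (fun n => ∫ ω, (Ψ n : Ω → ℝ) ω ∂P) atTop (𝓝 (∫ ω, (L : Ω → ℝ) ω ∂P)) := by
    simp only [← hinner]
    exact (htend.inner tendsto_const_nhds)
  have hLint : ∫ ω, (L : Ω → ℝ) ω ∂P = c := by
    rw [integral_congr_ae hc]
    simp
  have hgint : Integrable g P := hg.integrable one_le_two
  have hΨint : ∀ n : ℕ, 1 ≤ n → ∫ ω, (Ψ n : Ω → ℝ) ω ∂P = ∫ ω, g ω ∂P := by
    intro n hn
    rw [integral_congr_ae (hΨcoe n)]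
    exact integral_bAvg hT.toMeasurePreserving hgint hn
  have hceq : c = ∫ ω, g ω ∂P := by
    rw [← hLint]
    refine tendsto_nhds_unique htendint ?_
    refine Tendsto.congr' ?_ tendsto_const_nhds
    filter_upwards [eventually_ge_atTop 1] with n hn
    exact (hΨint n hn).symm
  -- conclude
  have hdiff : ∀ n, (fun ω => bAvg T g n ω - ∫ ω, g ω ∂P) =ᵐ[P] ((Ψ n - L : Lp ℝ 2 P) : Ω → ℝ) := by
    intro n
    refine EventuallyEq.trans ?_ (Lp.coeFn_sub (Ψ n) L).symm
    filter_upwards [hΨcoe n, hc] with ω h1 h2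
    simp [h1, h2, ← hceq]
  have hnorm0 : Tendsto (fun n => ‖Ψ n - L‖) atTop (𝓝 0) :=
    tendsto_iff_norm_sub_tendsto_zero.mp htend
  have key : ∀ n, eLpNorm (fun ω => bAvg T g n ω - ∫ ω, g ω ∂P) 2 P =
      ENNReal.ofReal ‖Ψ n - L‖ := by
    intro n
    rw [eLpNorm_congr_ae (hdiff n), Lp.norm_def,
      ENNReal.ofReal_toReal (Lp.eLpNorm_ne_top (Ψ n - L))]
  simp only [key]
  have := (ENNReal.continuous_ofReal.tendsto 0).comp hnorm0
  simpa [Function.comp_def] using this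

lemma bAvg_aesm (hT : MeasurePreserving T P P) {h : Ω → ℝ}
    (hm : AEStronglyMeasurable h P) (n : ℕ) : AEStronglyMeasurable (bAvg T h n) P := by
  have h1 : AEStronglyMeasurable (fun ω => ∑ t ∈ Finset.range n, h (T^[t] ω)) P :=
    Finset.aestronglyMeasurable_fun_sum _ fun t _ =>
      hm.comp_quasiMeasurePreserving (hT.iterate t).quasiMeasurePreserving
  exact AEStronglyMeasurable.const_smul h1 ((n:ℝ)⁻¹)

lemma eLpNorm_bAvg_le (hT : MeasurePreserving T P P) {h : Ω → ℝ}
    (hm : AEStronglyMeasurable h P) (n : ℕ) :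
    eLpNorm (bAvg T h n) 1 P ≤ eLpNorm h 1 P := by
  rcases Nat.eq_zero_or_pos n with hn | hn
  · subst hn
    have : bAvg T h 0 = fun _ => (0:ℝ) := by funext ω; simp [bAvg]
    simp [this]
  have hn0 : (n : ℝ≥0∞) ≠ 0 := by simpa using hn.ne'
  have hmt : ∀ t : ℕ, AEStronglyMeasurable (fun ω => h (T^[t] ω)) P := fun t =>
    hm.comp_quasiMeasurePreserving (hT.iterate t).quasiMeasurePreserving
  have h1 : eLpNorm (bAvg T h n) 1 P
      = (‖(n:ℝ)⁻¹‖₊ : ℝ≥0∞) * eLpNorm (fun ω => ∑ t ∈ Finset.range n, h (T^[t] ω)) 1 P := by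
    rw [← enorm_eq_nnnorm, ← eLpNorm_const_smul]
    rfl
  have h2 : eLpNorm (fun ω => ∑ t ∈ Finset.range n, h (T^[t] ω)) 1 P
      ≤ ∑ t ∈ Finset.range n, eLpNorm (fun ω => h (T^[t] ω)) 1 P := by
    have := eLpNorm_sum_le (s := Finset.range n)
      (f := fun t ω => h (T^[t] ω)) (fun t _ => hmt t) le_rfl
    refine le_trans (le_of_eq ?_) this
    apply eLpNorm_congr_ae
    filter_upwards with ω
    simp
  have h3 : ∀ t : ℕ, eLpNorm (fun ω => h (T^[t] ω)) 1 P = eLpNorm h 1 P := fun t =>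
    eLpNorm_comp_measurePreserving hm (hT.iterate t)
  have hcoe : (‖(n:ℝ)⁻¹‖₊ : ℝ≥0∞) = ((n:ℝ≥0∞))⁻¹ := by
    rw [nnnorm_inv, ENNReal.coe_inv (by simpa using hn.ne')]
    norm_cast
  calc eLpNorm (bAvg T h n) 1 P
      ≤ (‖(n:ℝ)⁻¹‖₊ : ℝ≥0∞) * (∑ t ∈ Finset.range n, eLpNorm (fun ω => h (T^[t] ω)) 1 P) := by
        rw [h1]; exact mul_le_mul_right h2 _
    _ = (‖(n:ℝ)⁻¹‖₊ : ℝ≥0∞) * ((n : ℝ≥0∞) * eLpNorm h 1 P) := by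
        rw [Finset.sum_congr rfl (fun t _ => h3 t), Finset.sum_const, Finset.card_range,
          nsmul_eq_mul]
    _ = eLpNorm h 1 P := by
        rw [hcoe, ← mul_assoc, ENNReal.inv_mul_cancel hn0 (ENNReal.natCast_ne_top n), one_mul]

lemma l1_birkhoff (hT : Ergodic T P) {f : Ω → ℝ} (hf : Integrable f P) :
    Tendsto (fun n => eLpNorm (fun ω => bAvg T f n ω - ∫ ω, f ω ∂P) 1 P) atTop (𝓝 0) := by
  rw [ENNReal.tendsto_atTop_zero]
  intro ε hε
  have hε3 : ε / 3 ≠ 0 := by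
    simp only [ne_eq, ENNReal.div_eq_zero_iff]
    push_neg
    exact ⟨hε.ne', by norm_num⟩
  obtain ⟨g, hgsub, hgmem⟩ :=
    (memLp_one_iff_integrable.mpr hf).exists_simpleFunc_eLpNorm_sub_lt (by norm_num) hε3
  have hg2 : MemLp (⇑g) 2 P := (g.memLp_top P).mono_exponent le_top
  have hgint : Integrable (⇑g) P := memLp_one_iff_integrable.mp hgmem
  set D : Ω → ℝ := fun ω => f ω - g ω with hD
  have hDint : Integrable D P := hf.sub hgint
  have hDe : eLpNorm D 1 P < ε / 3 := by
    refine lt_of_le_of_lt (le_of_eq (eLpNorm_congr_ae ?_)) hgsub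
    filter_upwards with ω
    simp [hD]
  -- the L² part
  have h2 := l2_birkhoff hT hg2
  rw [ENNReal.tendsto_atTop_zero] at h2
  obtain ⟨N, hN⟩ := h2 (ε / 3) (by positivity)
  refine ⟨N, fun n hn => ?_⟩
  set c : ℝ := ∫ ω, f ω ∂P
  set cg : ℝ := ∫ ω, g ω ∂P
  -- decomposition
  have hdecomp : (fun ω => bAvg T f n ω - c)
      = (fun ω => bAvg T D n ω) + ((fun ω => bAvg T g n ω - cg) + fun _ => cg - c) := by
    funext ω
    have : bAvg T f n ω = bAvg T D n ω + bAvg T g n ω := by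
      simp only [bAvg, hD, smul_eq_mul, ← mul_add, ← Finset.sum_add_distrib]
      congr 2
      funext t
      ring
    simp only [Pi.add_apply, this]
    ring
  -- a.e. strong measurability bits
  have hA1 : AEStronglyMeasurable (fun ω => bAvg T D n ω) P :=
    bAvg_aesm hT.toMeasurePreserving hDint.aestronglyMeasurable n
  have hA2 : AEStronglyMeasurable (fun ω => bAvg T g n ω - cg) P :=
    (bAvg_aesm hT.toMeasurePreserving hgint.aestronglyMeasurable n).sub aestronglyMeasurable_const
  have hA3 : AEStronglyMeasurable (fun _ : Ω => cg - c) P := aestronglyMeasurable_const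
  -- bounds
  have e1 : eLpNorm (fun ω => bAvg T D n ω) 1 P ≤ ε / 3 :=
    le_trans (eLpNorm_bAvg_le hT.toMeasurePreserving hDint.aestronglyMeasurable n) hDe.le
  have e2 : eLpNorm (fun ω => bAvg T g n ω - cg) 1 P ≤ ε / 3 :=
    le_trans (eLpNorm_le_eLpNorm_of_exponent_le one_le_two hA2) (hN n hn)
  have e3 : eLpNorm (fun _ : Ω => cg - c) 1 P ≤ ε / 3 := by
    have hconst : eLpNorm (fun _ : Ω => cg - c) 1 P = ENNReal.ofReal ‖cg - c‖ := by
      rw [eLpNorm_const _ one_ne_zero (IsProbabilityMeasure.ne_zero P)]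
      simp [Real.enorm_eq_ofReal_abs]
    have hval : ‖cg - c‖ ≤ ∫ ω, ‖D ω‖ ∂P := by
      have : cg - c = ∫ ω, (g ω - f ω) ∂P := by
        rw [integral_sub hgint hf]
      rw [this]
      refine le_trans (norm_integral_le_integral_norm _) (le_of_eq ?_)
      refine integral_congr_ae ?_
      filter_upwards with ω
      simp [hD, norm_sub_rev]
    have hDnorm : ENNReal.ofReal (∫ ω, ‖D ω‖ ∂P) = eLpNorm D 1 P := by
      rw [ofReal_integral_norm_eq_lintegral_enorm hDint, eLpNorm_one_eq_lintegral_enorm]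
    calc eLpNorm (fun _ : Ω => cg - c) 1 P = ENNReal.ofReal ‖cg - c‖ := hconst
      _ ≤ ENNReal.ofReal (∫ ω, ‖D ω‖ ∂P) := ENNReal.ofReal_le_ofReal hval
      _ = eLpNorm D 1 P := hDnorm
      _ ≤ ε / 3 := hDe.le
  -- combine
  calc eLpNorm (fun ω => bAvg T f n ω - c) 1 P
      = eLpNorm ((fun ω => bAvg T D n ω)
          + ((fun ω => bAvg T g n ω - cg) + fun _ => cg - c)) 1 P := by rw [hdecomp]
    _ ≤ eLpNorm (fun ω => bAvg T D n ω) 1 P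
        + eLpNorm ((fun ω => bAvg T g n ω - cg) + fun _ => cg - c) 1 P :=
          eLpNorm_add_le hA1 (hA2.add hA3) le_rfl
    _ ≤ eLpNorm (fun ω => bAvg T D n ω) 1 P
        + (eLpNorm (fun ω => bAvg T g n ω - cg) 1 P + eLpNorm (fun _ : Ω => cg - c) 1 P) :=
          add_le_add_right (eLpNorm_add_le hA2 hA3 le_rfl) _
    _ ≤ ε / 3 + (ε / 3 + ε / 3) := add_le_add e1 (add_le_add e2 e3)
    _ = ε := by
        rw [ENNReal.div_add_div_same, ENNReal.div_add_div_same,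
          show ε + (ε + ε) = 3 * ε by ring, mul_div_assoc,
          ENNReal.mul_div_cancel' (a := 3) (by norm_num) (by norm_num)]

lemma birkhoff_inMeasure (hT : Ergodic T P) {f : Ω → ℝ} (hf : Integrable f P) :
    TendstoInMeasure P (fun n => bAvg T f n) atTop (fun _ => ∫ ω, f ω ∂P) := by
  refine tendstoInMeasure_of_tendsto_eLpNorm (p := 1) one_ne_zero
    (fun n => bAvg_aesm hT.toMeasurePreserving hf.aestronglyMeasurable n)
    aestronglyMeasurable_const ?_
  have := l1_birkhoff hT hf
  refine this.congr fun n => ?_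
  rfl

lemma bracket_exists {E : Type*} [MetricSpace E]
    {Θ : Set E} (hΘcomp : IsCompact Θ)
    {D : Set E} (hDsub : D ⊆ Θ) (hDcnt : D.Countable)
    (hDdense : ∀ θ ∈ Θ, ∀ r > 0, ∃ y ∈ D, dist θ y < r)
    {ρ : E → Ω → ℝ} (hρcont : ∀ ω, ContinuousOn (fun θ => ρ θ ω) Θ)
    (hρmeas : ∀ θ, Measurable (ρ θ))
    {env : Ω → ℝ} (henv : Integrable env P)
    (henvb : ∀ ω, ∀ θ ∈ Θ, |ρ θ ω| ≤ env ω)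
    {θ0 : E} (hθ0 : θ0 ∈ Θ) {η : ℝ} (hη : 0 < η) :
    ∃ δ : ℝ, ∃ g : Ω → ℝ, 0 < δ ∧ Integrable g P ∧
      (∀ ω, ∀ θ ∈ Metric.ball θ0 δ ∩ Θ, g ω ≤ ρ θ ω) ∧
      (∫ ω, ρ θ0 ω ∂P) - η < ∫ ω, g ω ∂P := by
  -- the shrinking balls and countable dense pieces
  set r : ℕ → ℝ := fun k => 1 / (k + 1) with hr
  have hrpos : ∀ k, 0 < r k := fun k => by positivity
  set Dk : ℕ → Set E := fun k => D ∩ Metric.ball θ0 (r k) with hDk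
  have hDkne : ∀ k, (Dk k).Nonempty := by
    intro k
    obtain ⟨y, hyD, hy⟩ := hDdense θ0 hθ0 (r k) (hrpos k)
    exact ⟨y, hyD, by simpa [Metric.mem_ball, dist_comm] using hy⟩
  have hDkΘ : ∀ k, Dk k ⊆ Θ := fun k => (Set.inter_subset_left).trans hDsub
  haveI hcnt : ∀ k, Countable ↥(Dk k) := fun k =>
    (hDcnt.mono Set.inter_subset_left).to_subtype
  haveI hne : ∀ k, Nonempty ↥(Dk k) := fun k => (hDkne k).to_subtype
  set g : ℕ → Ω → ℝ := fun k ω => ⨅ θ : ↥(Dk k), ρ θ ω with hg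
  have hbdd : ∀ k ω, BddBelow (Set.range fun θ : ↥(Dk k) => ρ θ ω) := by
    intro k ω
    refine ⟨-env ω, ?_⟩
    rintro x ⟨θ, rfl⟩
    have := henvb ω θ (hDkΘ k θ.2)
    linarith [abs_le.mp this |>.1]
  have hle : ∀ k ω, ∀ θ' ∈ Dk k, g k ω ≤ ρ θ' ω := fun k ω θ' hθ' =>
    ciInf_le (hbdd k ω) ⟨θ', hθ'⟩
  have hge : ∀ k ω, -env ω ≤ g k ω := by
    intro k ω
    refine le_ciInf fun θ => ?_
    have := henvb ω θ (hDkΘ k θ.2)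
    linarith [abs_le.mp this |>.1]
  have habs : ∀ k ω, |g k ω| ≤ env ω := by
    intro k ω
    rw [abs_le]
    refine ⟨by linarith [hge k ω], ?_⟩
    obtain ⟨θ', hθ'⟩ := hDkne k
    exact (hle k ω θ' hθ').trans (abs_le.mp (henvb ω θ' (hDkΘ k hθ')) |>.2)
  have hmeas : ∀ k, Measurable (g k) := fun k => Measurable.iInf fun θ => hρmeas θ
  have hint : ∀ k, Integrable (g k) P := fun k =>
    henv.mono' (hmeas k).aestronglyMeasurable
      (ae_of_all _ fun ω => by rw [Real.norm_eq_abs]; exact habs k ω)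
  -- lower-bound property on the full ball
  have hlb : ∀ k ω, ∀ θ ∈ Metric.ball θ0 (r k) ∩ Θ, g k ω ≤ ρ θ ω := by
    intro k ω θ ⟨hθball, hθΘ⟩
    refine le_of_forall_pos_le_add fun ε hε => ?_
    have hc := (Metric.continuousWithinAt_iff).mp (hρcont ω θ hθΘ) ε hε
    obtain ⟨δ', hδ', hδ'c⟩ := hc
    have hrr : 0 < r k - dist θ θ0 := by
      rw [Metric.mem_ball] at hθball; linarith
    obtain ⟨y, hyD, hy⟩ := hDdense θ hθΘ (min δ' (r k - dist θ θ0)) (lt_min hδ' hrr)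
    have hyθ : dist y θ < δ' := by
      rw [dist_comm]; exact hy.trans_le (min_le_left _ _)
    have hyball : y ∈ Metric.ball θ0 (r k) := by
      rw [Metric.mem_ball]
      calc dist y θ0 ≤ dist y θ + dist θ θ0 := dist_triangle _ _ _
        _ < (r k - dist θ θ0) + dist θ θ0 := by
            have := hy.trans_le (min_le_right _ _)
            rw [dist_comm] at this
            linarith
        _ = r k := by ring
    have hclose := hδ'c (hDsub hyD) hyθ
    rw [Real.dist_eq] at hclose
    have h1 : ρ y ω ≤ ρ θ ω + ε := by linarith [abs_le.mp hclose.le |>.1, abs_le.mp hclose.le |>.2]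
    exact (hle k ω y ⟨hyD, hyball⟩).trans h1
  -- pointwise convergence to ρ θ0
  have hptw : ∀ ω, Tendsto (fun k => g k ω) atTop (𝓝 (ρ θ0 ω)) := by
    intro ω
    rw [Metric.tendsto_atTop]
    intro ε hε
    have hc := (Metric.continuousWithinAt_iff).mp (hρcont ω θ0 hθ0) (ε / 2) (by linarith)
    obtain ⟨δ', hδ', hδ'c⟩ := hc
    obtain ⟨N, hN⟩ := exists_nat_one_div_lt hδ'
    refine ⟨N, fun k hk => ?_⟩
    have hrk : r k < δ' := by
      have : r k ≤ r N := by
        apply one_div_le_one_div_of_le (by positivity)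
        have : (N:ℝ) ≤ k := by exact_mod_cast hk
        linarith
      exact this.trans_lt hN
    have hball : ∀ θ' ∈ Dk k, |ρ θ' ω - ρ θ0 ω| < ε / 2 := by
      intro θ' ⟨hθ'D, hθ'ball⟩
      have hd : dist θ' θ0 < δ' := (Metric.mem_ball.mp hθ'ball).trans hrk
      have := hδ'c (hDsub hθ'D) hd
      rwa [Real.dist_eq] at this
    have hlow : ρ θ0 ω - ε / 2 ≤ g k ω := by
      refine le_ciInf fun θ' => ?_
      have := hball θ' θ'.2
      linarith [abs_le.mp this.le |>.1]
    have hup : g k ω ≤ ρ θ0 ω + ε / 2 := by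
      obtain ⟨θ', hθ'⟩ := hDkne k
      refine (hle k ω θ' hθ').trans ?_
      have := hball θ' hθ'
      linarith [abs_le.mp this.le |>.2]
    rw [Real.dist_eq, abs_sub_lt_iff]
    constructor <;> linarith
  -- dominated convergence
  have htendint : Tendsto (fun k => ∫ ω, g k ω ∂P) atTop (𝓝 (∫ ω, ρ θ0 ω ∂P)) := by
    refine tendsto_integral_of_dominated_convergence env
      (fun k => (hmeas k).aestronglyMeasurable) henv
      (fun k => ae_of_all _ fun ω => by rw [Real.norm_eq_abs]; exact habs k ω)
      (ae_of_all _ hptw)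
    
  have : ∀ᶠ k in atTop, (∫ ω, ρ θ0 ω ∂P) - η < ∫ ω, g k ω ∂P :=
    htendint.eventually_const_lt (by linarith)
  obtain ⟨k, hk⟩ := this.exists
  exact ⟨r k, g k, hrpos k, hint k, hlb k, hk⟩

end Toolbox

/-- In the ergodic grouped M-estimation setting, for a fixed group assignment
`τ`, if the population criterion `S(·, τ)` attains a unique minimum on `Θ` at `θstar`, then
the profile M-estimator `θ̃ₙ` converges to `θstar` in P-measure. -/
theorem grouped_Mestimation_profile_consistency
    {Ω : Type*} [MeasurableSpace Ω] (P : Measure Ω) [IsProbabilityMeasure P]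
    (T : Ω → Ω) (hT : Ergodic T P)
    {d : ℕ} (hd : 1 ≤ d)
    (Θ : Set (EuclideanSpace ℝ (Fin d))) (hΘne : Θ.Nonempty) (hΘcomp : IsCompact Θ)
    {𝒢 : Type*} [Fintype 𝒢] [Nonempty 𝒢]
    (ρ : EuclideanSpace ℝ (Fin d) → 𝒢 → Ω → ℝ)
    (hρcont : ∀ τ ω, ContinuousOn (fun θ => ρ θ τ ω) Θ)
    (hρmeas : ∀ θ τ, Measurable (fun ω => ρ θ τ ω))
    (hρint : ∀ τ, Integrable (fun ω => ⨆ θ : Θ, |ρ (θ : EuclideanSpace ℝ (Fin d)) τ ω|) P)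
    -- the sample criterion
    (Sn : ℕ → EuclideanSpace ℝ (Fin d) → 𝒢 → Ω → ℝ)
    (hSn : ∀ n θ τ ω, Sn n θ τ ω = (n : ℝ)⁻¹ * ∑ t ∈ Finset.range n, ρ θ τ (T^[t] ω))
    -- the population criterion
    (S : EuclideanSpace ℝ (Fin d) → 𝒢 → ℝ)
    (hS : ∀ θ τ, S θ τ = ∫ ω, ρ θ τ ω ∂P)
    -- fix τ and assume S(·, τ) has a unique minimum on Θ at θstar
    (τ : 𝒢)
    (θstar : EuclideanSpace ℝ (Fin d))
    (hθstar_mem : θstar ∈ Θ)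
    (hθstar_min : ∀ θ ∈ Θ, S θstar τ ≤ S θ τ)
    (hθstar_uniq : ∀ θ ∈ Θ, θ ≠ θstar → S θstar τ < S θ τ)
    -- the profile estimators
    (θtilde : ℕ → Ω → EuclideanSpace ℝ (Fin d))
    (hθtilde_meas : ∀ n, Measurable (θtilde n))
    (hθtilde_min : ∀ n, ∀ᵐ ω ∂P, θtilde n ω ∈ Θ ∧
      ∀ θ ∈ Θ, Sn n (θtilde n ω) τ ω ≤ Sn n θ τ ω) :
    TendstoInMeasure P (fun n ω => θtilde n ω) atTop (fun _ => θstar) := by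

  classical
  have henv : Integrable (fun ω => ⨆ θ : Θ, |ρ (θ : EuclideanSpace ℝ (Fin d)) τ ω|) P := hρint τ
  set env : Ω → ℝ := fun ω => ⨆ θ : Θ, |ρ (θ : EuclideanSpace ℝ (Fin d)) τ ω| with henvdef
  have hbddA : ∀ ω, BddAbove (Set.range fun θ : Θ => |ρ (θ : EuclideanSpace ℝ (Fin d)) τ ω|) := by
    intro ω
    obtain ⟨C, hC⟩ := (hΘcomp.image_of_continuousOn ((hρcont τ ω).abs)).bddAbove
    refine ⟨C, ?_⟩
    rintro x ⟨θ, rfl⟩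
    exact hC ⟨(θ : EuclideanSpace ℝ (Fin d)), θ.2, rfl⟩
  have henvb : ∀ ω, ∀ θ ∈ Θ, |ρ θ τ ω| ≤ env ω := fun ω θ hθ =>
    le_ciSup (hbddA ω) (⟨θ, hθ⟩ : Θ)
  have hρint' : ∀ θ ∈ Θ, Integrable (fun ω => ρ θ τ ω) P := fun θ hθ =>
    henv.mono' (hρmeas θ τ).aestronglyMeasurable
      (ae_of_all _ fun ω => by rw [Real.norm_eq_abs]; exact henvb ω θ hθ)
  -- countable dense subset of Θ
  obtain ⟨s0, hs0c, hs0d⟩ := TopologicalSpace.exists_countable_dense ↥Θ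
  set D : Set (EuclideanSpace ℝ (Fin d)) := Subtype.val '' s0 with hDdef
  have hDsub : D ⊆ Θ := by rintro x ⟨y, hy, rfl⟩; exact y.2
  have hDcnt : D.Countable := hs0c.image _
  have hDdense : ∀ θ ∈ Θ, ∀ r > 0, ∃ y ∈ D, dist θ y < r := by
    intro θ hθ r hr
    obtain ⟨y, hymem, hys⟩ := Metric.dense_iff.mp hs0d ⟨θ, hθ⟩ r hr
    refine ⟨y, ⟨y, hys, rfl⟩, ?_⟩
    have := Metric.mem_ball.mp hymem
    rw [Subtype.dist_eq] at this
    rwa [dist_comm]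
  -- Sn in terms of bAvg
  have hSnb : ∀ n θ ω, Sn n θ τ ω = bAvg T (fun ω' => ρ θ τ ω') n ω := by
    intro n θ ω
    rw [hSn]
    simp [bAvg, smul_eq_mul]
  rw [tendstoInMeasure_iff_norm]
  simp only [← dist_eq_norm]
  intro ε hε
  set Kset : Set (EuclideanSpace ℝ (Fin d)) := {θ | θ ∈ Θ ∧ ε ≤ dist θ θstar} with hKdef
  by_cases hK : Kset.Nonempty
  swap
  · -- K empty : the bad set is null for every n
    have hz : ∀ n, P {ω | ε ≤ dist (θtilde n ω) θstar} = 0 := by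
      intro n
      rw [← nonpos_iff_eq_zero]
      refine le_trans (measure_mono_ae ?_) (le_of_eq (measure_empty))
      filter_upwards [hθtilde_min n] with ω hω hde
      exact absurd ⟨θtilde n ω, hω.1, hde⟩ hK
    simp only [hz]
    exact tendsto_const_nhds
  · -- K nonempty
    have hKclosed : IsClosed Kset := by
      have : Kset = Θ ∩ {θ | ε ≤ dist θ θstar} := by ext θ; simp [hKdef, Set.mem_inter_iff]
      rw [this]
      exact hΘcomp.isClosed.inter
        (isClosed_le continuous_const (continuous_id.dist continuous_const))
    have hKcomp : IsCompact Kset := hΘcomp.of_isClosed_subset hKclosed fun θ hθ => hθ.1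
    set η : EuclideanSpace ℝ (Fin d) → ℝ := fun θ0 => (S θ0 τ - S θstar τ) / 3 with hηdef
    have hηpos : ∀ θ0 ∈ Kset, 0 < η θ0 := by
      intro θ0 hθ0
      have hne : θ0 ≠ θstar := by
        intro h
        have h2 := hθ0.2
        rw [h, dist_self] at h2
        linarith
      have := hθstar_uniq θ0 hθ0.1 hne
      simp only [hηdef]
      linarith
    have hclaim : ∀ θ0 ∈ Kset, ∃ δ : ℝ, ∃ g : Ω → ℝ, 0 < δ ∧ Integrable g P ∧
        (∀ ω, ∀ θ ∈ Metric.ball θ0 δ ∩ Θ, g ω ≤ ρ θ τ ω) ∧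
        (∫ ω, ρ θ0 τ ω ∂P) - η θ0 < ∫ ω, g ω ∂P := by
      intro θ0 hθ0
      exact bracket_exists (ρ := fun θ ω => ρ θ τ ω) hΘcomp hDsub hDcnt hDdense
        (fun ω => hρcont τ ω) (fun θ => hρmeas θ τ) henv
        (fun ω θ hθ => henvb ω θ hθ) hθ0.1 (hηpos θ0 hθ0)
    choose! δf gf hδpos hgint hglb hgest using hclaim
    have hcover : Kset ⊆ ⋃ θ0 ∈ Kset, Metric.ball θ0 (δf θ0) := fun θ0 hθ0 =>
      Set.mem_biUnion hθ0 (Metric.mem_ball_self (hδpos θ0 hθ0))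
    obtain ⟨b, hbsub, hbfin, hbcover⟩ :=
      hKcomp.elim_finite_subcover_image (fun θ0 _ => Metric.isOpen_ball) hcover
    set t : Finset (EuclideanSpace ℝ (Fin d)) := hbfin.toFinset with htdef
    have htmem : ∀ i, i ∈ t ↔ i ∈ b := fun i => hbfin.mem_toFinset
    have htK : ∀ i ∈ t, i ∈ Kset := fun i hi => hbsub ((htmem i).mp hi)
    have htne : t.Nonempty := by
      obtain ⟨θK, hθK⟩ := hK
      have := hbcover hθK
      rw [Set.mem_iUnion₂] at this
      obtain ⟨i, hib, _⟩ := this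
      exact ⟨i, (htmem i).mpr hib⟩
    set η0 : ℝ := t.inf' htne η with hη0def
    have hη0pos : 0 < η0 := by
      rw [hη0def, Finset.lt_inf'_iff]
      exact fun i hi => hηpos i (htK i hi)
    have hη0le : ∀ i ∈ t, η0 ≤ η i := fun i hi => Finset.inf'_le _ hi
    have hρstarint : Integrable (fun ω => ρ θstar τ ω) P := hρint' θstar hθstar_mem
    -- the limit theorems
    have h0tend := tendstoInMeasure_iff_norm.mp (birkhoff_inMeasure hT hρstarint) η0 hη0pos
    simp only [← dist_eq_norm] at h0tend
    have hitend : ∀ i ∈ t,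
        Tendsto (fun n => P {ω | η i ≤ dist (bAvg T (gf i) n ω) (∫ ω, gf i ω ∂P)})
          atTop (𝓝 0) := fun i hi =>
      by simpa only [← dist_eq_norm] using
        tendstoInMeasure_iff_norm.mp (birkhoff_inMeasure hT (hgint i (htK i hi))) (η i) (hηpos i (htK i hi))
    -- set inclusion
    have hsub : ∀ n, ∀ᵐ ω ∂P, ω ∈ {ω | ε ≤ dist (θtilde n ω) θstar} →
        ω ∈ ({ω | η0 ≤ dist (bAvg T (fun ω' => ρ θstar τ ω') n ω) (∫ ω, ρ θstar τ ω ∂P)} ∪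
          ⋃ i ∈ t, {ω | η i ≤ dist (bAvg T (gf i) n ω) (∫ ω, gf i ω ∂P)}) := by
      intro n
      filter_upwards [hθtilde_min n] with ω hω hde
      by_contra hcon
      rw [Set.mem_union] at hcon
      push_neg at hcon
      obtain ⟨hnot0, hnoti⟩ := hcon
      rw [Set.mem_iUnion₂] at hnoti
      push_neg at hnoti
      have hgood0 : dist (bAvg T (fun ω' => ρ θstar τ ω') n ω) (∫ ω, ρ θstar τ ω ∂P) < η0 :=
        lt_of_not_ge hnot0
      have hmemK : θtilde n ω ∈ Kset := ⟨hω.1, hde⟩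
      have hcov := hbcover hmemK
      rw [Set.mem_iUnion₂] at hcov
      obtain ⟨i, hib, hiball⟩ := hcov
      have hit : i ∈ t := (htmem i).mpr hib
      have hiK : i ∈ Kset := htK i hit
      have higood : dist (bAvg T (gf i) n ω) (∫ ω, gf i ω ∂P) < η i :=
        lt_of_not_ge (hnoti i hit)
      -- the chain of inequalities
      have c1 : bAvg T (gf i) n ω ≤ Sn n (θtilde n ω) τ ω := by
        rw [hSnb]
        simp only [bAvg, smul_eq_mul]
        refine mul_le_mul_of_nonneg_left ?_ (by positivity)
        refine Finset.sum_le_sum fun k _ => ?_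
        exact hglb i hiK (T^[k] ω) (θtilde n ω) ⟨hiball, hω.1⟩
      have c2 : Sn n (θtilde n ω) τ ω ≤ Sn n θstar τ ω := hω.2 θstar hθstar_mem
      have c3 : Sn n θstar τ ω = bAvg T (fun ω' => ρ θstar τ ω') n ω := hSnb n θstar ω
      have hSstar : ∫ ω, ρ θstar τ ω ∂P = S θstar τ := (hS θstar τ).symm
      have hSi : ∫ ω, ρ i τ ω ∂P = S i τ := (hS i τ).symm
      rw [Real.dist_eq] at hgood0 higood
      rw [hSstar] at hgood0
      have hei := hgest i hiK
      rw [hSi] at hei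
      have hbound0 : bAvg T (fun ω' => ρ θstar τ ω') n ω < S θstar τ + η0 := by
        have := abs_lt.mp hgood0
        linarith [this.1, this.2]
      have hboundi : (∫ ω, gf i ω ∂P) - η i < bAvg T (gf i) n ω := by
        have := abs_lt.mp higood
        linarith [this.1, this.2]
      have hηi : η i = (S i τ - S θstar τ) / 3 := rfl
      have hη0i := hη0le i hit
      linarith
    -- measure bound and squeeze
    have hbound : ∀ n, P {ω | ε ≤ dist (θtilde n ω) θstar} ≤
        P {ω | η0 ≤ dist (bAvg T (fun ω' => ρ θstar τ ω') n ω) (∫ ω, ρ θstar τ ω ∂P)} +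
        ∑ i ∈ t, P {ω | η i ≤ dist (bAvg T (gf i) n ω) (∫ ω, gf i ω ∂P)} := by
      intro n
      refine le_trans (measure_mono_ae (hsub n)) ?_
      refine le_trans (measure_union_le _ _) ?_
      exact add_le_add_right (measure_biUnion_finset_le _ _) _
    have hsumtend : Tendsto (fun n =>
        P {ω | η0 ≤ dist (bAvg T (fun ω' => ρ θstar τ ω') n ω) (∫ ω, ρ θstar τ ω ∂P)} +
        ∑ i ∈ t, P {ω | η i ≤ dist (bAvg T (gf i) n ω) (∫ ω, gf i ω ∂P)}) atTop (𝓝 0) := by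
      have hsum : Tendsto (fun n =>
          ∑ i ∈ t, P {ω | η i ≤ dist (bAvg T (gf i) n ω) (∫ ω, gf i ω ∂P)}) atTop (𝓝 0) := by
        have := tendsto_finset_sum t fun i hi => hitend i hi
        simpa using this
      have := h0tend.add hsum
      simpa using this
    refine tendsto_of_tendsto_of_tendsto_of_le_of_le tendsto_const_nhds hsumtend
      (fun n => zero_le) hbound
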